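/- Let M = ![![0,0,1,0],![1,0,0,0],![0,0,1/2,1/2],![0,1,0,0]]. There is no mixed strategy p : Fin 4 → ℚ (nonnegative, summing to 1) such that ∑ i, p i * M i j > 1/4 for all j : Fin 4, but p = ![0,1/4,1/2,1/4] satisfies ∑ i, p i * M i j = 1/4 for all j. Hence the maximin value sup_p min_j ∑ i, p i * M i j equals 1/4 and is attained. -/

import Mathlib

theorem stmt_19
    (M : Fin 4 → Fin 4 → ℚ)
    (hM : M = ![![0,0,1,0],![1,0,0,0],![0,0,1/2,1/2],![0,1,0,0]]) :
    (¬ ∃ p : Fin 4 → ℚ, (∀ i, 0 ≤ p i) ∧ (∑ i : Fin 4, p i) = 1 ∧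
        ∀ j : Fin 4, 1/4 < ∑ i : Fin 4, p i * M i j) ∧
    (∀ j : Fin 4, ∑ i : Fin 4, (![0, 1/4, 1/2, 1/4] : Fin 4 → ℚ) i * M i j = 1/4) := by
  subst hM
  constructor
  · rintro ⟨p, hpos, hsum, hgt⟩
    have h0 := hgt 0
    have h1 := hgt 1
    have h2 := hgt 2
    have h3 := hgt 3
    simp [Fin.sum_univ_four, Matrix.vecHead, Matrix.vecTail] at h0 h1 h2 h3 hsum
    linarith
  · intro j
    fin_cases j <;> norm_num [Fin.sum_univ_four, Matrix.vecHead, Matrix.vecTail, Matrix.cons_val_two, Matrix.cons_val_three]
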